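/- Let B be a unital complex *-algebra, β an exponential one-parameter group on B, c a nonzero purely imaginary complex number, and τ : B → ℂ a linear functional with τ ∘ β_c = τ. Then τ ∘ β_z = τ for every z ∈ ℂ. -/

import Mathlib

/-- A function `f : ℂ → ℂ` is of exponential type: it is entire and satisfies a bound
`|f z| ≤ M * exp (r * |Im z|)`. -/
def ExpType (f : ℂ → ℂ) : Prop :=
  Differentiable ℂ f ∧
    ∃ M r : ℝ, 0 < M ∧ 0 < r ∧ ∀ z : ℂ, ‖f z‖ ≤ M * Real.exp (r * |z.im|)

/-- A function from `ℂ` into a complex vector space `V` is of finite exponential type if it is a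
finite linear combination of functions of exponential type with coefficients in `V`. -/
def FinExpType {V : Type*} [AddCommGroup V] [Module ℂ V] (f : ℂ → V) : Prop :=
  ∃ (n : ℕ) (v : Fin n → V) (g : Fin n → ℂ → ℂ),
    (∀ j, ExpType (g j)) ∧ ∀ z : ℂ, f z = ∑ j, g j z • v j

/-- A one-parameter group on a unital complex *-algebra `B`: a family of algebra automorphisms
`β z` with `β (y + z) = β y ∘ β z` and `star (β z b) = β (conj z) (star b)`. -/
def IsOneParamGroup {B : Type*} [Ring B] [Algebra ℂ B] [StarRing B] [StarModule ℂ B]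
    (β : ℂ → (B ≃ₐ[ℂ] B)) : Prop :=
  (∀ y z : ℂ, ∀ b : B, β (y + z) b = β y (β z b)) ∧
    (∀ z : ℂ, ∀ b : B, star (β z b) = β (starRingEnd ℂ z) (star b))

/-- An exponential one-parameter group: a one-parameter group such that `z ↦ β z b` is of finite
exponential type for every `b`. -/
def IsExpOneParamGroup {B : Type*} [Ring B] [Algebra ℂ B] [StarRing B] [StarModule ℂ B]
    (β : ℂ → (B ≃ₐ[ℂ] B)) : Prop :=
  IsOneParamGroup β ∧ ∀ b : B, FinExpType (fun z => β z b)

/-- If a linear functional on a unital complex *-algebra is invariant under an exponential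
one-parameter group at a nonzero purely imaginary number `c`, then it is invariant at every
`z ∈ ℂ`. -/
theorem linear_functional_invariant_of_invariant_at_imaginary
    {B : Type*} [Ring B] [Algebra ℂ B] [StarRing B] [StarModule ℂ B]
    (β : ℂ → (B ≃ₐ[ℂ] B)) (hβ : IsExpOneParamGroup β)
    (c : ℂ) (hc : c ≠ 0) (hcim : c.re = 0)
    (τ : B →ₗ[ℂ] ℂ) (hτ : ∀ b : B, τ (β c b) = τ b) :
    ∀ z : ℂ, ∀ b : B, τ (β z b) = τ b := by
  intro z b
  obtain ⟨⟨hadd, _⟩, hfin⟩ := hβ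
  obtain ⟨n, v, g, hg, hrep⟩ := hfin b
  set f : ℂ → ℂ := fun w => τ (β w b) with hf
  have hcim' : c.im ≠ 0 := by
    intro h
    exact hc (Complex.ext hcim h)
  have hβ0 : β 0 b = b := by
    have h := hadd 0 0 b
    simp only [add_zero] at h
    exact (β 0).injective h.symm
  have hper : ∀ w : ℂ, f (w + c) = f w := by
    intro w
    show τ (β (w + c) b) = τ (β w b)
    rw [add_comm, hadd c w b, hτ]
  have hperZ : ∀ k : ℤ, ∀ w : ℂ, f (w + (k : ℂ) * c) = f w := by
    intro k w
    have hP : Function.Periodic f c := hper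
    exact (hP.int_mul k) w
  have hfeq : ∀ w, f w = ∑ j, g j w * τ (v j) := by
    intro w
    show τ ((β w) b) = _
    rw [show (β w) b = ∑ j, g j w • v j from hrep w, map_sum]
    simp [smul_eq_mul]
  have hdiff : Differentiable ℂ f := by
    have hfe : f = fun w => ∑ j, g j w * τ (v j) := funext hfeq
    rw [hfe]
    exact Differentiable.fun_sum fun j _ => (hg j).1.mul_const _
  choose M r hM hr hbnd using fun j => (hg j).2
  set C := ∑ j, M j * ‖τ (v j)‖ * Real.exp (r j * |c.im|) with hC
  have hstrip : ∀ w : ℂ, |w.im| ≤ |c.im| → ‖f w‖ ≤ C := by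
    intro w hw
    rw [hfeq]
    calc ‖∑ j, g j w * τ (v j)‖
        ≤ ∑ j, ‖g j w * τ (v j)‖ := by
          simpa using norm_sum_le Finset.univ (fun j => g j w * τ (v j))
      _ ≤ C := by
          apply Finset.sum_le_sum
          intro j _
          rw [norm_mul]
          calc ‖g j w‖ * ‖τ (v j)‖
              ≤ (M j * Real.exp (r j * |w.im|)) * ‖τ (v j)‖ := by
                apply mul_le_mul_of_nonneg_right (hbnd j w) (norm_nonneg _)
            _ ≤ M j * ‖τ (v j)‖ * Real.exp (r j * |c.im|) := by
                rw [mul_right_comm]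
                apply mul_le_mul_of_nonneg_left _ (mul_nonneg (hM j).le (norm_nonneg _))
                exact Real.exp_le_exp.mpr (mul_le_mul_of_nonneg_left hw (le_of_lt (hr j)))
  have hbdd : Bornology.IsBounded (Set.range f) := by
    rw [isBounded_iff_forall_norm_le]
    refine ⟨C, ?_⟩
    rintro x ⟨w, rfl⟩
    set k : ℤ := round (-w.im / c.im) with hk
    have heq : f w = f (w + (k : ℂ) * c) := (hperZ k w).symm
    rw [heq]
    apply hstrip
    have him : (w + (k : ℂ) * c).im = w.im + (k : ℝ) * c.im := by simp
    rw [him]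
    have h1 : w.im + (k : ℝ) * c.im = c.im * ((k : ℝ) - (-w.im / c.im)) := by
      field_simp
      ring
    rw [h1, abs_mul]
    have h2 : |(k : ℝ) - (-w.im / c.im)| ≤ 1/2 := by
      rw [abs_sub_comm]
      exact abs_sub_round _
    calc |c.im| * |(k : ℝ) - (-w.im / c.im)| ≤ |c.im| * (1/2) :=
          mul_le_mul_of_nonneg_left h2 (abs_nonneg _)
      _ ≤ |c.im| := by nlinarith [abs_nonneg c.im]
  have := hdiff.apply_eq_apply_of_bounded hbdd z 0
  show f z = τ b
  rw [this]
  show τ (β 0 b) = τ b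
  rw [hβ0]
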